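/- Fix A > 0, an integer k ≥ 1, and a real r with 0 < r < √A/2. Let G(n,r,A) be the random geometric graph on the flat torus T²_A with n i.i.d. uniform points and radius r. Then lim_{n→∞} E[β_{k,k}(G(n,r,A))] / (n^{k+1}·r^{2k}) = (π/A)^k, where β_{k,k}(G) is the rank of the eulerian magnitude homology group EMH_{k,k}(G). -/

import Mathlib

open scoped Classical

variable {V : Type*}

/-- Length of the walk described by a list of landmarks: sum of path-metric
distances between consecutive entries (`⊤`-valued if some pair is unreachable). -/
noncomputable def mlen (G : SimpleGraph V) : List V → ℕ∞
  | [] => 0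
  | [_] => 0
  | a :: b :: t => G.edist a b + mlen G (b :: t)

/-- A list of landmarks is a trail if consecutive entries are distinct and reachable. -/
def IsTrailList (G : SimpleGraph V) (l : List V) : Prop :=
  l.Chain' fun a b => a ≠ b ∧ G.Reachable a b

/-- `trails G k ℓ` is the set `T_{k,ℓ}(G)` of `k`-trails of length `ℓ`,
encoded as lists with `k+1` entries. -/
def trails (G : SimpleGraph V) (k ℓ : ℕ) : Set (List V) :=
  {l | l.length = k + 1 ∧ IsTrailList G l ∧ mlen G l = (ℓ : ℕ∞)}

/-- `etrails G k ℓ` is the set `ET_{k,ℓ}(G)` of eulerian `k`-trails of length `ℓ`. -/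
def etrails (G : SimpleGraph V) (k ℓ : ℕ) : Set (List V) :=
  {l | l ∈ trails G k ℓ ∧ l.Nodup}

/-- Boundary of a single generator: `∂_{·,ℓ}(x₀,…,x_k) = Σ_{i=1}^{k-1} (-1)^i ∂^i`,
where `∂^i` deletes the `i`-th landmark if this does not change the length. -/
noncomputable def bdryElt (G : SimpleGraph V) (ℓ : ℕ) (l : List V) : List V →₀ ℤ :=
  ∑ i ∈ Finset.Ioo 0 (l.length - 1),
    if mlen G (l.eraseIdx i) = (ℓ : ℕ∞) then ((-1 : ℤ) ^ i) • Finsupp.single (l.eraseIdx i) 1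
    else 0

/-- The magnitude differential (length parameter `ℓ`) on the ambient free abelian group
on all landmark lists.  Its restriction to `MC_{k,ℓ}(G)` (chains supported on
`trails G k ℓ`) is `∂_{k,ℓ}`. -/
noncomputable def bdry (G : SimpleGraph V) (ℓ : ℕ) : (List V →₀ ℤ) →ₗ[ℤ] (List V →₀ ℤ) :=
  Finsupp.lsum ℤ fun l => LinearMap.toSpanSingleton ℤ _ (bdryElt G ℓ l)

/-- `MC_{k,ℓ}(G)`: the free abelian group on `T_{k,ℓ}(G)`, realized as the submodule of
finitely supported `ℤ`-valued functions supported on trails. -/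
noncomputable def MC (G : SimpleGraph V) (k ℓ : ℕ) : Submodule ℤ (List V →₀ ℤ) :=
  Finsupp.supported ℤ ℤ (trails G k ℓ)

/-- `EMC_{k,ℓ}(G)`: the free abelian group on `ET_{k,ℓ}(G)`. -/
noncomputable def EMC (G : SimpleGraph V) (k ℓ : ℕ) : Submodule ℤ (List V →₀ ℤ) :=
  Finsupp.supported ℤ ℤ (etrails G k ℓ)

/-- `EMH_{k,k}(G) = ker(∂_{k,k}|_{EMC_{k,k}(G)})`, the first-diagonal eulerian magnitude
homology group (`EMC_{k+1,k}(G) = 0`, so homology is just the kernel). -/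
noncomputable def EMHkk (G : SimpleGraph V) (k : ℕ) : Submodule ℤ (List V →₀ ℤ) :=
  EMC G k k ⊓ LinearMap.ker (bdry G k)

/-- `MH_{k,k}(G) = ker(∂_{k,k}|_{MC_{k,k}(G)})`. -/
noncomputable def MHkk (G : SimpleGraph V) (k : ℕ) : Submodule ℤ (List V →₀ ℤ) :=
  MC G k k ⊓ LinearMap.ker (bdry G k)

/-- `β_{k,k}(G)`, the rank of `EMH_{k,k}(G)`. -/
noncomputable def emBetti (G : SimpleGraph V) (k : ℕ) : ℕ :=
  Module.finrank ℤ (EMHkk G k)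

/-- `c(G,H)`: the number of vertex subsets of `G` whose induced subgraph is isomorphic
to `H`. -/
noncomputable def subgraphCount (G : SimpleGraph V) {W : Type*} (H : SimpleGraph W) : ℕ :=
  Set.ncard {s : Set V | Nonempty ((G.induce s) ≃g H)}

open MeasureTheory
open scoped ENNReal

/-- The flat-torus distance on `ℝ²` for the torus `T²_A = ℝ²/(√A·ℤ²)`:
`d_T(x,y) = min_{w ∈ √A·ℤ²} ‖x - y - w‖` (Euclidean norm). -/
noncomputable def torusDist (A : ℝ) (x y : EuclideanSpace ℝ (Fin 2)) : ℝ :=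
  ⨅ w : ℤ × ℤ, ‖x - y - Real.sqrt A • (WithLp.equiv 2 (Fin 2 → ℝ)).symm ![(w.1 : ℝ), (w.2 : ℝ)]‖

/-- The fundamental domain `[0,√A)²` of the torus `T²_A`. -/
def torusBox (A : ℝ) : Set (EuclideanSpace ℝ (Fin 2)) :=
  {x | ∀ i, x i ∈ Set.Ico (0 : ℝ) (Real.sqrt A)}

/-- The uniform (normalized Haar) probability measure on `T²_A`, realized as the
normalized Lebesgue measure on the fundamental domain `[0,√A)²`. -/
noncomputable def torusUnif (A : ℝ) : Measure (EuclideanSpace ℝ (Fin 2)) :=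
  (ENNReal.ofReal A)⁻¹ • volume.restrict (torusBox A)

/-- The random geometric graph on `n` sampled points of `T²_A` with radius `ρ`:
distinct `i, j` are adjacent iff `d_T(p_i, p_j) ≤ ρ`. -/
noncomputable def rggGraph (A ρ : ℝ) {n : ℕ} (P : Fin n → EuclideanSpace ℝ (Fin 2)) :
    SimpleGraph (Fin n) :=
  SimpleGraph.fromRel fun i j => torusDist A (P i) (P j) ≤ ρ

/-- The law of `n` i.i.d. uniform points on `T²_A`. -/
noncomputable def rggSample (A : ℝ) (n : ℕ) :
    Measure (Fin n → EuclideanSpace ℝ (Fin 2)) :=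
  Measure.pi fun _ => torusUnif A

section Combinatorics

variable {V : Type*}

lemma one_le_edist {G : SimpleGraph V} {a b : V} (hne : a ≠ b) (hr : G.Reachable a b) :
    1 ≤ G.edist a b := by
  rw [ENat.one_le_iff_ne_zero]
  simp [SimpleGraph.edist_eq_zero_iff, hne]

lemma mlen_ge (G : SimpleGraph V) : ∀ (a : V) (t : List V), IsTrailList G (a :: t) →
    (t.length : ℕ∞) ≤ mlen G (a :: t)
  | a, [], _ => by simp
  | a, b :: t, h => by
    have h1 : a ≠ b ∧ G.Reachable a b := (List.isChain_cons_cons.mp h).1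
    have h2 : IsTrailList G (b :: t) := (List.isChain_cons_cons.mp h).2
    have ih := mlen_ge G b t h2
    have e1 : 1 ≤ G.edist a b := one_le_edist h1.1 h1.2
    show ((t.length + 1 : ℕ) : ℕ∞) ≤ G.edist a b + mlen G (b :: t)
    push_cast
    calc ((t.length : ℕ∞) + 1) = 1 + t.length := by rw [add_comm]
    _ ≤ G.edist a b + mlen G (b :: t) := add_le_add e1 ih

lemma mlen_chain (G : SimpleGraph V) : ∀ (a : V) (t : List V), List.Chain' G.Adj (a :: t) →
    mlen G (a :: t) = (t.length : ℕ∞)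
  | a, [], _ => by simp [mlen]
  | a, b :: t, h => by
    have h1 : G.Adj a b := (List.isChain_cons_cons.mp h).1
    have ih := mlen_chain G b t (List.isChain_cons_cons.mp h).2
    show G.edist a b + mlen G (b :: t) = ((t.length + 1 : ℕ) : ℕ∞)
    rw [SimpleGraph.edist_eq_one_iff_adj.mpr h1, ih]
    push_cast
    rw [add_comm]

lemma chain_of_mlen (G : SimpleGraph V) : ∀ (a : V) (t : List V), IsTrailList G (a :: t) →
    mlen G (a :: t) = (t.length : ℕ∞) → List.Chain' G.Adj (a :: t)
  | _, [], _, _ => List.isChain_singleton _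
  | a, b :: t, h, hm => by
    have h1 : a ≠ b ∧ G.Reachable a b := (List.isChain_cons_cons.mp h).1
    have h2 : IsTrailList G (b :: t) := (List.isChain_cons_cons.mp h).2
    have ih := mlen_ge G b t h2
    have e1 : 1 ≤ G.edist a b := one_le_edist h1.1 h1.2
    have hm' : G.edist a b + mlen G (b :: t) = ((t.length + 1 : ℕ) : ℕ∞) := by
      simpa [mlen] using hm
    have hne1 : G.edist a b ≠ ⊤ := by
      intro hc; rw [hc, top_add] at hm'; exact (ENat.coe_ne_top _) hm'.symm
    have hne2 : mlen G (b :: t) ≠ ⊤ := by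
      intro hc; rw [hc, add_top] at hm'; exact (ENat.coe_ne_top _) hm'.symm
    lift G.edist a b to ℕ using hne1 with d hd
    lift mlen G (b :: t) to ℕ using hne2 with m hmm
    have hdm : d + m = t.length + 1 := by exact_mod_cast hm'
    have hd1 : 1 ≤ d := by exact_mod_cast e1
    have hmt : t.length ≤ m := by exact_mod_cast ih
    have : d = 1 ∧ m = t.length := by omega
    refine List.isChain_cons_cons.mpr ⟨?_, chain_of_mlen G b t h2 ?_⟩
    · exact SimpleGraph.edist_eq_one_iff_adj.mp (by rw [← hd, this.1]; norm_num)
    · rw [← hmm, this.2]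

lemma etrails_eq (G : SimpleGraph V) (k : ℕ) :
    etrails G k k = {l | l.length = k + 1 ∧ l.Chain' G.Adj ∧ l.Nodup} := by
  ext l
  constructor
  · rintro ⟨⟨hlen, htrail, hmlen⟩, hnodup⟩
    refine ⟨hlen, ?_, hnodup⟩
    obtain ⟨a, t, rfl⟩ : ∃ a t, l = a :: t := by
      cases l with
      | nil => simp at hlen
      | cons a t => exact ⟨a, t, rfl⟩
    have ht : t.length = k := by simpa using hlen
    exact chain_of_mlen G a t htrail (by rw [hmlen, ht])
  · rintro ⟨hlen, hchain, hnodup⟩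
    obtain ⟨a, t, rfl⟩ : ∃ a t, l = a :: t := by
      cases l with
      | nil => simp at hlen
      | cons a t => exact ⟨a, t, rfl⟩
    have ht : t.length = k := by simpa using hlen
    refine ⟨⟨hlen, ?_, ?_⟩, hnodup⟩
    · exact hchain.imp fun {a b} hab => ⟨hab.ne, hab.reachable⟩
    · rw [mlen_chain G a t hchain, ht]

end Combinatorics
section Counting

variable {V : Type*}

/-- The set of injective chains as functions. -/
def chainFuns (G : SimpleGraph V) (k : ℕ) : Set (Fin (k + 1) → V) :=
  {f | Function.Injective f ∧ ∀ j : Fin k, G.Adj (f j.castSucc) (f j.succ)}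

lemma chain'_ofFn_iff (G : SimpleGraph V) {k : ℕ} (f : Fin (k + 1) → V) :
    (List.ofFn f).Chain' G.Adj ↔ ∀ j : Fin k, G.Adj (f j.castSucc) (f j.succ) := by
  rw [List.Chain', List.isChain_iff_getElem]
  constructor
  · intro h j
    have hj : (j : ℕ) + 1 < (List.ofFn f).length := by simp [j.2]
    have := h j hj
    rw [List.getElem_ofFn, List.getElem_ofFn] at this
    convert this using 2 <;> exact Fin.ext (by simp)
  · intro h i hi
    have hi' : i < k := by simpa using hi
    have := h ⟨i, hi'⟩
    rw [List.getElem_ofFn, List.getElem_ofFn]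
    convert this using 2 <;> exact Fin.ext (by simp)

lemma eq_ofFn_of_length_eq {l : List V} {k : ℕ} (hlen : l.length = k + 1) :
    l = List.ofFn fun i : Fin (k + 1) => l.get (Fin.cast hlen.symm i) := by
  refine List.ext_getElem (by simp [hlen]) fun n h₁ h₂ => ?_
  rw [List.getElem_ofFn]
  simp [List.get_eq_getElem]

lemma etrails_eq_image (G : SimpleGraph V) (k : ℕ) :
    etrails G k k = List.ofFn '' chainFuns G k := by
  rw [etrails_eq]
  ext l
  constructor
  · rintro ⟨hlen, hchain, hnodup⟩
    refine ⟨fun i => l.get (Fin.cast hlen.symm i), ⟨?_, ?_⟩, (eq_ofFn_of_length_eq hlen).symm⟩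
    · exact List.nodup_ofFn.mp ((eq_ofFn_of_length_eq hlen) ▸ hnodup)
    · exact (chain'_ofFn_iff G _).mp ((eq_ofFn_of_length_eq hlen) ▸ hchain)
  · rintro ⟨f, ⟨hinj, hchain⟩, rfl⟩
    exact ⟨by simp, (chain'_ofFn_iff G f).mpr hchain, List.nodup_ofFn.mpr hinj⟩

lemma ncard_etrails (G : SimpleGraph V) (k : ℕ) :
    (etrails G k k).ncard = (chainFuns G k).ncard := by
  rw [etrails_eq_image, Set.ncard_image_of_injective _ List.ofFn_injective]

end Counting
section Rank

variable {V : Type*}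

lemma eq_ofFn_of_length_eq' {l : List V} {m : ℕ} (hlen : l.length = m) :
    l = List.ofFn fun i : Fin m => l.get (Fin.cast hlen.symm i) := by
  refine List.ext_getElem (by simp [hlen]) fun n h₁ h₂ => ?_
  rw [List.getElem_ofFn]
  simp [List.get_eq_getElem]

lemma setOf_length_eq_range (m : ℕ) :
    {l : List V | l.length = m} = Set.range (List.ofFn : (Fin m → V) → List V) := by
  ext l
  constructor
  · intro hl
    exact ⟨fun i => l.get (Fin.cast hl.symm i), (eq_ofFn_of_length_eq' hl).symm⟩
  · rintro ⟨f, rfl⟩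
    simp

lemma ncard_setOf_length_eq [Fintype V] (m : ℕ) :
    {l : List V | l.length = m}.ncard = Fintype.card V ^ m := by
  rw [setOf_length_eq_range, ← Nat.card_coe_set_eq,
    Nat.card_range_of_injective List.ofFn_injective, Nat.card_eq_fintype_card, Fintype.card_fun,
    Fintype.card_fin]

lemma finite_setOf_length_eq [Fintype V] (m : ℕ) : {l : List V | l.length = m}.Finite := by
  rw [setOf_length_eq_range]; exact Set.finite_range _

lemma finite_etrails [Fintype V] (G : SimpleGraph V) (k ℓ : ℕ) : (etrails G k ℓ).Finite := by
  apply (finite_setOf_length_eq (k + 1)).subset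
  rintro l ⟨⟨hlen, -, -⟩, -⟩
  exact hlen

lemma moduleFinite_supported {α : Type*} {s : Set α} (hs : s.Finite) :
    Module.Finite ℤ (Finsupp.supported ℤ ℤ s) := by
  haveI := hs.fintype
  haveI : Module.Finite ℤ (↥s → ℤ) := Module.Finite.pi
  haveI : Module.Finite ℤ (↥s →₀ ℤ) :=
    Module.Finite.equiv (Finsupp.linearEquivFunOnFinite ℤ ℤ ↥s).symm
  exact Module.Finite.equiv (Finsupp.supportedEquivFinsupp s).symm

set_option maxHeartbeats 1000000 in
lemma finrank_supported {α : Type*} {s : Set α} (hs : s.Finite) :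
    Module.finrank ℤ (Finsupp.supported ℤ ℤ s) = s.ncard := by
  haveI := hs.fintype
  rw [(Finsupp.supportedEquivFinsupp s).finrank_eq, Module.finrank_finsupp_self,
    ← Nat.card_eq_fintype_card, Nat.card_coe_set_eq]

lemma bdryElt_mem_supported (G : SimpleGraph V) (k : ℕ) {l : List V} (hl : l.length = k + 1) :
    bdryElt G k l ∈ Finsupp.supported ℤ ℤ {l' : List V | l'.length = k} := by
  apply Submodule.sum_mem
  intro i hi
  rw [Finset.mem_Ioo] at hi
  have hik : i < l.length := by omega
  have hlen : (l.eraseIdx i).length = k := by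
    rw [List.length_eraseIdx, if_pos hik, hl]
    omega
  split_ifs
  · exact Submodule.smul_mem _ _ (Finsupp.single_mem_supported ℤ 1 hlen)
  · exact Submodule.zero_mem _

lemma bdry_mem_supported (G : SimpleGraph V) (k : ℕ) {x : List V →₀ ℤ}
    (hx : x ∈ EMC G k k) :
    bdry G k x ∈ Finsupp.supported ℤ ℤ {l' : List V | l'.length = k} := by
  rw [bdry, Finsupp.lsum_apply]
  apply Submodule.sum_mem
  intro l hl
  simp only [LinearMap.toSpanSingleton_apply]
  apply Submodule.smul_mem
  have hlmem : l ∈ etrails G k k := (Finsupp.mem_supported ℤ x).mp hx hl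
  exact bdryElt_mem_supported G k hlmem.1.1

theorem emBetti_bounds [Fintype V] (G : SimpleGraph V) (k : ℕ) :
    emBetti G k ≤ (etrails G k k).ncard ∧
      (etrails G k k).ncard ≤ emBetti G k + Fintype.card V ^ k := by
  classical
  set T : Submodule ℤ (List V →₀ ℤ) := Finsupp.supported ℤ ℤ {l' : List V | l'.length = k}
    with hT
  set f : ↥(EMC G k k) →ₗ[ℤ] (List V →₀ ℤ) := (bdry G k).domRestrict (EMC G k k) with hf
  haveI hEMCfin : Module.Finite ℤ ↥(EMC G k k) := moduleFinite_supported (finite_etrails G k k)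
  haveI hTfin : Module.Finite ℤ ↥T := moduleFinite_supported (finite_setOf_length_eq k)
  -- betti = finrank of ker f
  have hker : LinearMap.ker f = Submodule.comap (EMC G k k).subtype (EMHkk G k) := by
    rw [hf, LinearMap.ker_domRestrict, EMHkk, Submodule.comap_inf, Submodule.comap_subtype_self,
      top_inf_eq]
  have hbetti : emBetti G k = Module.finrank ℤ ↥(LinearMap.ker f) := by
    rw [emBetti, hker]
    exact (Submodule.comapSubtypeEquivOfLe (inf_le_left :
      EMC G k k ⊓ LinearMap.ker (bdry G k) ≤ EMC G k k)).finrank_eq.symm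
  -- range f ≤ T
  have hrange : LinearMap.range f ≤ T := by
    rintro y ⟨x, rfl⟩
    exact bdry_mem_supported G k x.2
  -- cardinal bookkeeping
  have hcEMC : Module.rank ℤ ↥(EMC G k k) < Cardinal.aleph0 := Module.rank_lt_aleph0 ℤ _
  have hcT : Module.rank ℤ ↥T < Cardinal.aleph0 := Module.rank_lt_aleph0 ℤ _
  have hkerlt : Module.rank ℤ ↥(LinearMap.ker f) < Cardinal.aleph0 :=
    lt_of_le_of_lt (Submodule.rank_le _) hcEMC
  have hrangele : Module.rank ℤ ↥(LinearMap.range f) ≤ Module.rank ℤ ↥T :=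
    Submodule.rank_mono hrange
  have hrangelt : Module.rank ℤ ↥(LinearMap.range f) < Cardinal.aleph0 :=
    lt_of_le_of_lt hrangele hcT
  have hrn := LinearMap.rank_range_add_rank_ker f
  have hadd : Module.finrank ℤ ↥(EMC G k k) =
      Module.finrank ℤ ↥(LinearMap.range f) + Module.finrank ℤ ↥(LinearMap.ker f) := by
    rw [Module.finrank, Module.finrank, Module.finrank, ← hrn,
      Cardinal.toNat_add hrangelt hkerlt]
  have hEMCcard : Module.finrank ℤ ↥(EMC G k k) = (etrails G k k).ncard :=
    finrank_supported (finite_etrails G k k)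
  have hTcard : Module.finrank ℤ ↥T = Fintype.card V ^ k := by
    rw [hT, finrank_supported (finite_setOf_length_eq k), ncard_setOf_length_eq]
  have hrangecard : Module.finrank ℤ ↥(LinearMap.range f) ≤ Fintype.card V ^ k := by
    rw [← hTcard, Module.finrank, Module.finrank]
    exact Cardinal.toNat_le_toNat hrangele hcT
  constructor
  · rw [hbetti, ← hEMCcard, hadd]; omega
  · rw [← hEMCcard, hadd, hbetti]; omega

end Rank
section Torus

open MeasureTheory Metric

local notation "E2" => EuclideanSpace ℝ (Fin 2)

/-- The lattice vector of the torus lattice. -/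
noncomputable def tvec (A : ℝ) (w : ℤ × ℤ) : E2 :=
  Real.sqrt A • (WithLp.equiv 2 (Fin 2 → ℝ)).symm ![(w.1 : ℝ), (w.2 : ℝ)]

lemma torusDist_def (A : ℝ) (x y : E2) :
    torusDist A x y = ⨅ w : ℤ × ℤ, ‖x - y - tvec A w‖ := rfl

lemma tvec_apply (A : ℝ) (w : ℤ × ℤ) (i : Fin 2) :
    tvec A w i = Real.sqrt A * ![(w.1 : ℝ), (w.2 : ℝ)] i := rfl

lemma tvec_zero (A : ℝ) : tvec A 0 = 0 := by
  ext i
  rw [tvec_apply]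
  fin_cases i <;> simp

lemma tvec_sub (A : ℝ) (w w' : ℤ × ℤ) : tvec A w - tvec A w' = tvec A (w - w') := by
  ext i
  simp only [PiLp.sub_apply, tvec_apply]
  fin_cases i <;> simp <;> ring

lemma norm_tvec_sq {A : ℝ} (hA : 0 ≤ A) (w : ℤ × ℤ) :
    ‖tvec A w‖ ^ 2 = A * ((w.1 : ℝ) ^ 2 + (w.2 : ℝ) ^ 2) := by
  rw [EuclideanSpace.norm_eq, Real.sq_sqrt (by positivity), Fin.sum_univ_two]
  simp only [tvec_apply, Matrix.cons_val_zero, Matrix.cons_val_one, Matrix.head_cons,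
    Real.norm_eq_abs, sq_abs]
  rw [mul_pow, mul_pow, Real.sq_sqrt hA]
  ring

lemma one_le_int_sq_sum {w : ℤ × ℤ} (hw : w ≠ 0) :
    (1 : ℝ) ≤ (w.1 : ℝ) ^ 2 + (w.2 : ℝ) ^ 2 := by
  have : (1 : ℤ) ≤ w.1 ^ 2 + w.2 ^ 2 := by
    have h : w.1 ≠ 0 ∨ w.2 ≠ 0 := by
      by_contra hc
      push_neg at hc
      exact hw (Prod.ext hc.1 hc.2)
    rcases h with h | h
    · nlinarith [sq_nonneg w.2, Int.one_le_abs h, sq_abs w.1]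
    · nlinarith [sq_nonneg w.1, Int.one_le_abs h, sq_abs w.2]
  exact_mod_cast this

lemma norm_tvec {A : ℝ} (hA : 0 < A) {w : ℤ × ℤ} (hw : w ≠ 0) :
    Real.sqrt A ≤ ‖tvec A w‖ := by
  have h2 : A ≤ ‖tvec A w‖ ^ 2 := by
    rw [norm_tvec_sq hA.le]
    nlinarith [one_le_int_sq_sum hw]
  calc Real.sqrt A ≤ Real.sqrt (‖tvec A w‖ ^ 2) := Real.sqrt_le_sqrt h2
  _ = ‖tvec A w‖ := Real.sqrt_sq (norm_nonneg _)

lemma dist_tvec {A : ℝ} (hA : 0 < A) {w w' : ℤ × ℤ} (hw : w ≠ w') :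
    Real.sqrt A ≤ dist (tvec A w) (tvec A w') := by
  rw [dist_eq_norm, tvec_sub]
  exact norm_tvec hA (sub_ne_zero.mpr hw)

lemma bddBelow_tdist (A : ℝ) (v : E2) : BddBelow (Set.range fun w : ℤ × ℤ => ‖v - tvec A w‖) := by
  refine ⟨0, ?_⟩
  rintro _ ⟨w, rfl⟩
  positivity

/-- Attainment of the infimum defining the torus distance. -/
lemma exists_tvec_min {A : ℝ} (hA : 0 < A) (v : E2) :
    ∃ w₀ : ℤ × ℤ, ∀ w : ℤ × ℤ, ‖v - tvec A w₀‖ ≤ ‖v - tvec A w‖ := by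
  set g : ℤ × ℤ → ℝ := fun w => ‖v - tvec A w‖ with hg
  have hg0 : g 0 = ‖v‖ := by rw [hg]; simp [tvec_zero]
  set K : Set (ℤ × ℤ) := {w | g w ≤ ‖v‖} with hK
  have h0K : (0 : ℤ × ℤ) ∈ K := by rw [hK]; simp only [Set.mem_setOf_eq, hg0]; exact le_refl _
  have hsA : 0 < Real.sqrt A := Real.sqrt_pos.mpr hA
  -- K is finite
  have hKfin : K.Finite := by
    set N : ℤ := ⌈2 * ‖v‖ / Real.sqrt A⌉ with hN
    apply Set.Finite.subset ((Set.finite_Icc (-N) N).prod (Set.finite_Icc (-N) N))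
    intro w hwK
    have hcw : ‖tvec A w‖ ≤ 2 * ‖v‖ := by
      have h1 : ‖tvec A w‖ - ‖v‖ ≤ ‖tvec A w - v‖ := norm_sub_norm_le _ _
      have h2 : ‖tvec A w - v‖ = ‖v - tvec A w‖ := norm_sub_rev _ _
      have h3 : g w ≤ ‖v‖ := hwK
      rw [hg] at h3
      linarith
    have habs : ∀ i : Fin 2, Real.sqrt A * |![(w.1:ℝ), (w.2:ℝ)] i| ≤ ‖tvec A w‖ := by
      intro i
      have hsq : (Real.sqrt A * |![(w.1:ℝ), (w.2:ℝ)] i|) ^ 2 ≤ ‖tvec A w‖ ^ 2 := by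
        rw [norm_tvec_sq hA.le, mul_pow, sq_abs, Real.sq_sqrt hA.le]
        have h01 : (![(w.1:ℝ), (w.2:ℝ)] i) ^ 2 ≤ (w.1:ℝ) ^ 2 + (w.2:ℝ) ^ 2 := by
          fin_cases i <;> simp <;> nlinarith [sq_nonneg ((w.1:ℝ)), sq_nonneg ((w.2:ℝ))]
        exact mul_le_mul_of_nonneg_left h01 hA.le
      have := Real.sqrt_le_sqrt hsq
      rwa [Real.sqrt_sq (by positivity), Real.sqrt_sq (norm_nonneg _)] at this
    have hb : ∀ i : Fin 2, |![(w.1:ℝ), (w.2:ℝ)] i| ≤ (N : ℝ) := by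
      intro i
      have h1 := habs i
      have h2 : |![(w.1:ℝ), (w.2:ℝ)] i| ≤ 2 * ‖v‖ / Real.sqrt A := by
        rw [le_div_iff₀ hsA]
        nlinarith
      calc |![(w.1:ℝ), (w.2:ℝ)] i| ≤ 2 * ‖v‖ / Real.sqrt A := h2
      _ ≤ (N : ℝ) := Int.le_ceil _
    constructor
    · have := hb 0
      simp only [Matrix.cons_val_zero] at this
      rw [abs_le] at this
      exact ⟨by exact_mod_cast this.1, by exact_mod_cast this.2⟩
    · have := hb 1
      simp only [Matrix.cons_val_one, Matrix.head_cons, Matrix.cons_val_zero] at this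
      rw [abs_le] at this
      exact ⟨by exact_mod_cast this.1, by exact_mod_cast this.2⟩
  obtain ⟨w₀, hw₀K, hmin⟩ := Set.exists_min_image K g hKfin ⟨0, h0K⟩
  refine ⟨w₀, fun w => ?_⟩
  by_cases hw : w ∈ K
  · exact hmin w hw
  · have h1 : ¬ g w ≤ ‖v‖ := hw
    have h2 : g w₀ ≤ ‖v‖ := hw₀K
    push_neg at h1
    exact le_of_lt (lt_of_le_of_lt h2 h1)

lemma torusDist_eq_min {A : ℝ} (hA : 0 < A) (x y : E2) :
    ∃ w₀ : ℤ × ℤ, torusDist A x y = ‖x - y - tvec A w₀‖ ∧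
      ∀ w, ‖x - y - tvec A w₀‖ ≤ ‖x - y - tvec A w‖ := by
  obtain ⟨w₀, hw₀⟩ := exists_tvec_min hA (x - y)
  refine ⟨w₀, ?_, hw₀⟩
  rw [torusDist_def]
  exact le_antisymm (ciInf_le (bddBelow_tdist A _) w₀) (le_ciInf hw₀)

lemma torusDist_le_iff {A : ℝ} (hA : 0 < A) (x y : E2) (ρ : ℝ) :
    torusDist A x y ≤ ρ ↔ ∃ w : ℤ × ℤ, ‖x - y - tvec A w‖ ≤ ρ := by
  constructor
  · intro h
    obtain ⟨w₀, h1, -⟩ := torusDist_eq_min hA x y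
    exact ⟨w₀, h1 ▸ h⟩
  · rintro ⟨w, hw⟩
    exact le_trans (ciInf_le (bddBelow_tdist A _) w) hw

lemma torusDist_symm {A : ℝ} (hA : 0 < A) (x y : E2) :
    torusDist A x y = torusDist A y x := by
  have key : ∀ u v : E2, torusDist A u v ≤ torusDist A v u := by
    intro u v
    obtain ⟨w₀, h1, -⟩ := torusDist_eq_min hA v u
    rw [h1, torusDist_def]
    refine le_trans (ciInf_le (bddBelow_tdist A _) (-w₀)) (le_of_eq ?_)
    rw [← norm_neg]
    congr 1
    have : tvec A (-w₀) = - tvec A w₀ := by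
      have := tvec_sub A 0 w₀
      rw [tvec_zero, zero_sub, zero_sub] at this
      exact this.symm
    rw [this]
    abel
  exact le_antisymm (key x y) (key y x)

end Torus
section TorusMeasure

open MeasureTheory Metric

local notation "E2" => EuclideanSpace ℝ (Fin 2)

lemma measurableSet_torusBox (A : ℝ) : MeasurableSet (torusBox A) := by
  have : torusBox A = ⋂ i : Fin 2, (fun x : E2 => x i) ⁻¹' Set.Ico 0 (Real.sqrt A) := by
    ext x; simp [torusBox]
  rw [this]
  exact MeasurableSet.iInter fun i =>
    ((measurable_pi_apply i).comp (WithLp.measurable_ofLp 2 (Fin 2 → ℝ)) : Measurable fun x : E2 => x i) measurableSet_Ico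

lemma volume_torusBox {A : ℝ} (hA : 0 < A) : volume (torusBox A) = ENNReal.ofReal A := by
  have heq : torusBox A = (MeasurableEquiv.toLp 2 (Fin 2 → ℝ)).symm ⁻¹'
      (Set.univ.pi fun _ : Fin 2 => Set.Ico 0 (Real.sqrt A)) := by
    ext x
    simp [torusBox, Set.mem_univ_pi]
  rw [heq, MeasurePreserving.measure_preimage
    (EuclideanSpace.volume_preserving_symm_measurableEquiv_toLp (Fin 2))
    ((MeasurableSet.univ_pi fun _ => measurableSet_Ico).nullMeasurableSet)]
  rw [volume_pi_pi]
  simp only [Real.volume_Ico, sub_zero]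
  rw [Fin.prod_const]
  rw [← ENNReal.ofReal_pow (Real.sqrt_nonneg A), sq, Real.mul_self_sqrt hA.le]

lemma torusUnif_isProb {A : ℝ} (hA : 0 < A) : IsProbabilityMeasure (torusUnif A) := by
  constructor
  rw [torusUnif, Measure.smul_apply, Measure.restrict_apply_univ, volume_torusBox hA,
    smul_eq_mul, ENNReal.inv_mul_cancel (by simp [hA]) ENNReal.ofReal_ne_top]

lemma torusBall_eq_iUnion {A : ℝ} (hA : 0 < A) (x : E2) (ρ : ℝ) :
    {y : E2 | torusDist A x y ≤ ρ} = ⋃ w : ℤ × ℤ, closedBall (x - tvec A w) ρ := by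
  ext y
  rw [Set.mem_setOf_eq, torusDist_le_iff hA, Set.mem_iUnion]
  apply exists_congr fun w => ?_
  have h : x - y - tvec A w = -(y - (x - tvec A w)) := by abel
  rw [mem_closedBall, dist_eq_norm, h, norm_neg]

lemma measurableSet_torusBall {A : ℝ} (hA : 0 < A) (x : E2) (ρ : ℝ) :
    MeasurableSet {y : E2 | torusDist A x y ≤ ρ} := by
  rw [torusBall_eq_iUnion hA]
  exact MeasurableSet.iUnion fun w => measurableSet_closedBall

lemma torus_tiling {A : ℝ} (hA : 0 < A) (y : E2) :
    ∃! w : ℤ × ℤ, y - tvec A w ∈ torusBox A := by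
  have hsA : 0 < Real.sqrt A := Real.sqrt_pos.mpr hA
  have hmem : ∀ (w : ℤ × ℤ) (i : Fin 2),
      (y - tvec A w) i = y i - Real.sqrt A * ![(w.1:ℝ), (w.2:ℝ)] i := by
    intro w i
    rw [PiLp.sub_apply, tvec_apply]
  refine ⟨(⌊y 0 / Real.sqrt A⌋, ⌊y 1 / Real.sqrt A⌋), ?_, ?_⟩
  · intro i
    rw [hmem]
    fin_cases i <;>
      simp only [Matrix.cons_val_zero, Matrix.cons_val_one, Matrix.head_cons] <;>
      constructor
    · rw [mul_comm]; exact Int.sub_floor_div_mul_nonneg (y 0) hsA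
    · rw [mul_comm]; exact Int.sub_floor_div_mul_lt (y 0) hsA
    · rw [mul_comm]; exact Int.sub_floor_div_mul_nonneg (y 1) hsA
    · rw [mul_comm]; exact Int.sub_floor_div_mul_lt (y 1) hsA
  · rintro ⟨a, b⟩ hw
    have h0 := hw 0
    have h1 := hw 1
    rw [hmem] at h0 h1
    simp only [Matrix.cons_val_zero, Matrix.cons_val_one, Matrix.head_cons] at h0 h1
    have ha : ⌊y 0 / Real.sqrt A⌋ = a := by
      rw [Int.floor_eq_iff]
      constructor
      · rw [le_div_iff₀ hsA]; have := h0.1; linarith [h0.1]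
      · rw [div_lt_iff₀ hsA]; push_cast; linarith [h0.2]
    have hb : ⌊y 1 / Real.sqrt A⌋ = b := by
      rw [Int.floor_eq_iff]
      constructor
      · rw [le_div_iff₀ hsA]; linarith [h1.1]
      · rw [div_lt_iff₀ hsA]; push_cast; linarith [h1.2]
    exact Prod.ext ha.symm hb.symm

lemma volume_closedBall_two (x : E2) {r : ℝ} (hr : 0 ≤ r) :
    volume (closedBall x r) = ENNReal.ofReal (Real.pi * r ^ 2) := by
  rw [EuclideanSpace.volume_closedBall (Fin 2) x r]
  simp only [Fintype.card_fin]
  have h2 : ((2 : ℕ) : ℝ) / 2 + 1 = 2 := by norm_num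
  rw [h2, Real.Gamma_two, div_one, ← Real.sqrt_sq Real.pi_nonneg]
  rw [Real.sqrt_sq Real.pi_nonneg, Real.sq_sqrt Real.pi_nonneg]
  rw [← ENNReal.ofReal_pow hr, ← ENNReal.ofReal_mul (by positivity), mul_comm]

theorem torusUnif_ball {A r : ℝ} (hA : 0 < A) (hr0 : 0 < r) (hr1 : r < Real.sqrt A / 2)
    (x : E2) :
    torusUnif A {y : E2 | torusDist A x y ≤ r} =
      (ENNReal.ofReal A)⁻¹ * ENNReal.ofReal (Real.pi * r ^ 2) := by
  have hS := measurableSet_torusBall hA x r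
  rw [torusUnif, Measure.smul_apply, Measure.restrict_apply hS, smul_eq_mul]
  congr 1
  rw [torusBall_eq_iUnion hA, Set.iUnion_inter]
  -- disjointness of the translated balls
  have hdisj : Pairwise (Function.onFun Disjoint
      fun w : ℤ × ℤ => closedBall (x - tvec A w) r ∩ torusBox A) := by
    intro w w' hne
    have hd : r + r < dist (x - tvec A w) (x - tvec A w') := by
      rw [dist_sub_left]
      have := dist_tvec hA hne
      linarith
    exact ((closedBall_disjoint_closedBall hd).mono Set.inter_subset_left Set.inter_subset_left)
  rw [measure_iUnion hdisj fun w => measurableSet_closedBall.inter (measurableSet_torusBox A)]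
  -- translation invariance
  have htrans : ∀ w : ℤ × ℤ, volume (closedBall (x - tvec A w) r ∩ torusBox A) =
      volume (closedBall x r ∩ {y : E2 | y - tvec A w ∈ torusBox A}) := by
    intro w
    have hpre : closedBall (x - tvec A w) r ∩ torusBox A =
        (fun y : E2 => y + tvec A w) ⁻¹'
          (closedBall x r ∩ {y : E2 | y - tvec A w ∈ torusBox A}) := by
      ext y
      simp only [Set.mem_inter_iff, Set.mem_preimage, mem_closedBall, Set.mem_setOf_eq,
        add_sub_cancel_right]
      constructor
      · rintro ⟨h1, h2⟩
        refine ⟨?_, h2⟩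
        have : dist (y + tvec A w) x = dist y (x - tvec A w) := by
          rw [dist_eq_norm, dist_eq_norm]
          congr 1
          abel
        rw [this]; exact h1
      · rintro ⟨h1, h2⟩
        refine ⟨?_, h2⟩
        have : dist (y + tvec A w) x = dist y (x - tvec A w) := by
          rw [dist_eq_norm, dist_eq_norm]
          congr 1
          abel
        rw [← this]; exact h1
    rw [hpre, measure_preimage_add_right]
  simp_rw [htrans]
  -- the translated boxes tile the plane
  have hcover : (⋃ w : ℤ × ℤ, {y : E2 | y - tvec A w ∈ torusBox A}) = Set.univ := by
    ext y
    simp only [Set.mem_iUnion, Set.mem_setOf_eq, Set.mem_univ, iff_true]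
    exact ⟨(torus_tiling hA y).exists.choose, (torus_tiling hA y).exists.choose_spec⟩
  have hboxdisj : Pairwise (Function.onFun Disjoint
      fun w : ℤ × ℤ => {y : E2 | y - tvec A w ∈ torusBox A}) := by
    intro w w' hne
    rw [Function.onFun, Set.disjoint_left]
    intro y hy hy'
    exact hne ((torus_tiling hA y).unique hy hy')
  have hboxmeas : ∀ w : ℤ × ℤ, MeasurableSet {y : E2 | y - tvec A w ∈ torusBox A} := by
    intro w
    exact (measurable_id.sub_const (tvec A w)) (measurableSet_torusBox A)
  rw [← measure_iUnion (fun w w' hne => ((hboxdisj hne).mono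
      Set.inter_subset_right Set.inter_subset_right))
      (fun w => measurableSet_closedBall.inter (hboxmeas w)),
    ← Set.inter_iUnion, hcover, Set.inter_univ, volume_closedBall_two x hr0.le]

end TorusMeasure
section Probability

open MeasureTheory Metric

local notation "E2" => EuclideanSpace ℝ (Fin 2)

/-- The probability that two uniform points are within torus distance `r`. -/
noncomputable def pBall (A r : ℝ) : ℝ≥0∞ :=
  (ENNReal.ofReal A)⁻¹ * ENNReal.ofReal (Real.pi * r ^ 2)

lemma measurableSet_torusDist_pair {A : ℝ} (hA : 0 < A) (ρ : ℝ) :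
    MeasurableSet {q : E2 × E2 | torusDist A q.1 q.2 ≤ ρ} := by
  have heq : {q : E2 × E2 | torusDist A q.1 q.2 ≤ ρ} =
      ⋃ w : ℤ × ℤ, {q : E2 × E2 | ‖q.1 - q.2 - tvec A w‖ ≤ ρ} := by
    ext q
    rw [Set.mem_setOf_eq, torusDist_le_iff hA, Set.mem_iUnion]
    rfl
  rw [heq]
  refine MeasurableSet.iUnion fun w => ?_
  have hc : Continuous fun q : E2 × E2 => ‖q.1 - q.2 - tvec A w‖ :=
    ((continuous_fst.sub continuous_snd).sub continuous_const).norm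
  exact measurableSet_le hc.measurable measurable_const

/-- The chain event on `m+1` points. -/
def chainSet (A r : ℝ) (m : ℕ) : Set (Fin (m + 1) → E2) :=
  {Q | ∀ j : Fin m, torusDist A (Q j.castSucc) (Q j.succ) ≤ r}

lemma measurableSet_chainSet {A : ℝ} (hA : 0 < A) (r : ℝ) (m : ℕ) :
    MeasurableSet (chainSet A r m) := by
  have heq : chainSet A r m = ⋂ j : Fin m,
      (fun Q : Fin (m + 1) → E2 => (Q j.castSucc, Q j.succ)) ⁻¹'
        {q : E2 × E2 | torusDist A q.1 q.2 ≤ r} := by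
    ext Q; simp [chainSet]
  rw [heq]
  exact MeasurableSet.iInter fun j =>
    ((measurable_pi_apply _).prodMk (measurable_pi_apply _))
      (measurableSet_torusDist_pair hA r)

theorem chainSet_measure {A r : ℝ} (hA : 0 < A) (hr0 : 0 < r) (hr1 : r < Real.sqrt A / 2) :
    ∀ m : ℕ, Measure.pi (fun _ : Fin (m + 1) => torusUnif A) (chainSet A r m) = pBall A r ^ m := by
  haveI := torusUnif_isProb hA
  intro m
  induction m with
  | zero =>
    have : chainSet A r 0 = Set.univ := by
      ext Q; simp only [chainSet, Set.mem_setOf_eq, Set.mem_univ, iff_true]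
      intro j; exact j.elim0
    rw [this, pow_zero]
    exact measure_univ
  | succ m ih =>
    set μ : Measure E2 := torusUnif A with hμ
    have hmp := measurePreserving_piFinSuccAbove (fun _ : Fin (m + 2) => μ) (Fin.last (m + 1))
    set S' : Set (E2 × (Fin (m + 1) → E2)) :=
      {q | q.2 ∈ chainSet A r m ∧ torusDist A (q.2 (Fin.last m)) q.1 ≤ r} with hS'
    have hS'meas : MeasurableSet S' := by
      apply MeasurableSet.inter
      · exact measurable_snd (measurableSet_chainSet hA r m)
      · show MeasurableSet ((fun q : E2 × (Fin (m + 1) → E2) => (q.2 (Fin.last m), q.1)) ⁻¹'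
          {q : E2 × E2 | torusDist A q.1 q.2 ≤ r})
        exact (((measurable_pi_apply (Fin.last m)).comp measurable_snd).prodMk measurable_fst)
          (measurableSet_torusDist_pair hA r)
    have hpre : chainSet A r (m + 1) =
        (MeasurableEquiv.piFinSuccAbove (fun _ : Fin (m + 2) => E2) (Fin.last (m + 1))) ⁻¹' S' := by
      ext Q
      have happ : (MeasurableEquiv.piFinSuccAbove (fun _ : Fin (m + 2) => E2) (Fin.last (m + 1))) Q
          = (Q (Fin.last (m + 1)), fun j => Q ((Fin.last (m + 1)).succAbove j)) := rfl
      rw [Set.mem_preimage, happ]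
      simp only [hS', Set.mem_setOf_eq, chainSet, Fin.succAbove_last]
      constructor
      · intro h
        refine ⟨fun j => ?_, ?_⟩
        · have := h j.castSucc
          rwa [Fin.succ_castSucc] at this
        · have := h (Fin.last m)
          rwa [Fin.succ_last] at this
      · rintro ⟨h1, h2⟩ j
        refine Fin.lastCases ?_ (fun i => ?_) j
        · rwa [Fin.succ_last]
        · have := h1 i
          rwa [← Fin.succ_castSucc] at this
    rw [hpre, hmp.measure_preimage hS'meas.nullMeasurableSet]
    rw [Measure.prod_apply_symm hS'meas]
    have hslice : ∀ Q' : Fin (m + 1) → E2,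
        μ ((fun x => (x, Q')) ⁻¹' S') =
          Set.indicator (chainSet A r m) (fun _ => pBall A r) Q' := by
      intro Q'
      by_cases hQ : Q' ∈ chainSet A r m
      · have : ((fun x => (x, Q')) ⁻¹' S') = {y : E2 | torusDist A (Q' (Fin.last m)) y ≤ r} := by
          ext x
          simp only [hS', Set.mem_preimage, Set.mem_setOf_eq, hQ, true_and]
        rw [this, Set.indicator_of_mem hQ, hμ]
        exact torusUnif_ball hA hr0 hr1 _
      · have : ((fun x => (x, Q')) ⁻¹' S') = ∅ := by
          ext x
          simp only [hS', Set.mem_preimage, Set.mem_setOf_eq, hQ, false_and,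
            Set.mem_empty_iff_false]
        rw [this, Set.indicator_of_notMem hQ, measure_empty]
    rw [lintegral_congr hslice, lintegral_indicator (measurableSet_chainSet hA r m)]
    rw [setLIntegral_const, ih, pow_succ, mul_comm]

end Probability
section Sampling

open MeasureTheory Metric

local notation "E2" => EuclideanSpace ℝ (Fin 2)

lemma measurePreserving_comp_inj {A : ℝ} (hA : 0 < A) {n s : ℕ} {ι : Fin s → Fin n}
    (hι : Function.Injective ι) :
    MeasurePreserving (fun P : Fin n → E2 => P ∘ ι) (rggSample A n)
      (Measure.pi fun _ : Fin s => torusUnif A) := by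
  haveI := torusUnif_isProb hA
  set e : (Fin s ⊕ ↥(Set.range ι)ᶜ) ≃ Fin n :=
    (Equiv.sumCongr (Equiv.ofInjective ι hι) (Equiv.refl _)).trans
      (Equiv.Set.sumCompl (Set.range ι)) with he
  have h1 : MeasurePreserving
      (MeasurableEquiv.piCongrLeft (fun _ : Fin n => E2) e).symm
      (Measure.pi fun _ : Fin n => torusUnif A)
      (Measure.pi fun _ : Fin s ⊕ ↥(Set.range ι)ᶜ => torusUnif A) :=
    (measurePreserving_piCongrLeft (fun _ : Fin n => torusUnif A) e).symm _
  have h2 : MeasurePreserving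
      (MeasurableEquiv.sumPiEquivProdPi fun _ : Fin s ⊕ ↥(Set.range ι)ᶜ => E2)
      (Measure.pi fun _ => torusUnif A)
      ((Measure.pi fun _ : Fin s => torusUnif A).prod
        (Measure.pi fun _ : ↥(Set.range ι)ᶜ => torusUnif A)) :=
    measurePreserving_sumPiEquivProdPi fun _ => torusUnif A
  have h3 : MeasurePreserving (Prod.fst)
      ((Measure.pi fun _ : Fin s => torusUnif A).prod
        (Measure.pi fun _ : ↥(Set.range ι)ᶜ => torusUnif A))
      (Measure.pi fun _ : Fin s => torusUnif A) := by
    refine ⟨measurable_fst, ?_⟩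
    rw [Measure.map_fst_prod]
    simp
  have hcomp := h3.comp (h2.comp h1)
  have hfun : (fun P : Fin n → E2 => P ∘ ι) =
      (Prod.fst ∘ ((MeasurableEquiv.sumPiEquivProdPi fun _ : Fin s ⊕ ↥(Set.range ι)ᶜ => E2) ∘
        (MeasurableEquiv.piCongrLeft (fun _ : Fin n => E2) e).symm)) := by
    funext P
    funext j
    have hsymm : ∀ i, ((MeasurableEquiv.piCongrLeft (fun _ : Fin n => E2) e).symm P) i
        = P (e i) := by
      intro i
      exact Equiv.piCongrLeft_symm_apply (fun _ => E2) e P i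
    show P (ι j) = ((MeasurableEquiv.piCongrLeft (fun _ : Fin n => E2) e).symm P) (Sum.inl j)
    rw [hsymm]
    congr 1
  rw [hfun]
  exact hcomp

lemma rgg_chain_prob {A r : ℝ} (hA : 0 < A) (hr0 : 0 < r) (hr1 : r < Real.sqrt A / 2)
    {n m : ℕ} {ι : Fin (m + 1) → Fin n} (hι : Function.Injective ι) :
    rggSample A n {P : Fin n → E2 |
        ∀ j : Fin m, torusDist A (P (ι j.castSucc)) (P (ι j.succ)) ≤ r} = pBall A r ^ m := by
  have hpre : {P : Fin n → E2 |
      ∀ j : Fin m, torusDist A (P (ι j.castSucc)) (P (ι j.succ)) ≤ r} =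
      (fun P : Fin n → E2 => P ∘ ι) ⁻¹' chainSet A r m := rfl
  rw [hpre, (measurePreserving_comp_inj hA hι).measure_preimage
    (measurableSet_chainSet hA r m).nullMeasurableSet]
  exact chainSet_measure hA hr0 hr1 m

end Sampling
section Count

open MeasureTheory

local notation "E2" => EuclideanSpace ℝ (Fin 2)

/-- The predicate underlying the path count. -/
def chainPred (A r : ℝ) {n m : ℕ} (P : Fin n → E2) (ι : Fin (m + 1) → Fin n) : Prop :=
  Function.Injective ι ∧ ∀ j : Fin m, torusDist A (P (ι j.castSucc)) (P (ι j.succ)) ≤ r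

/-- The number of injective torus-chains in the sample. -/
noncomputable def chainCount (A r : ℝ) (n m : ℕ) (P : Fin n → E2) : ℕ :=
  (Finset.univ.filter fun ι : Fin (m + 1) → Fin n => chainPred A r P ι).card

lemma rggGraph_adj {A ρ : ℝ} (hA : 0 < A) {n : ℕ} (P : Fin n → E2) (i j : Fin n) :
    (rggGraph A ρ P).Adj i j ↔ i ≠ j ∧ torusDist A (P i) (P j) ≤ ρ := by
  rw [rggGraph, SimpleGraph.fromRel_adj]
  constructor
  · rintro ⟨hne, h | h⟩
    · exact ⟨hne, h⟩
    · exact ⟨hne, (torusDist_symm hA (P j) (P i)) ▸ h⟩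
  · rintro ⟨hne, h⟩
    exact ⟨hne, Or.inl h⟩

lemma chainFuns_rgg {A r : ℝ} (hA : 0 < A) {n k : ℕ} (P : Fin n → E2) :
    chainFuns (rggGraph A r P) k = {ι : Fin (k + 1) → Fin n | chainPred A r P ι} := by
  ext ι
  simp only [chainFuns, chainPred, Set.mem_setOf_eq]
  constructor
  · rintro ⟨hinj, hadj⟩
    exact ⟨hinj, fun j => ((rggGraph_adj hA P _ _).mp (hadj j)).2⟩
  · rintro ⟨hinj, hd⟩
    refine ⟨hinj, fun j => (rggGraph_adj hA P _ _).mpr ⟨?_, hd j⟩⟩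
    intro hc
    exact absurd (hinj hc) (Fin.castSucc_lt_succ (i := j)).ne

lemma ncard_etrails_rgg {A r : ℝ} (hA : 0 < A) {n k : ℕ} (P : Fin n → E2) :
    (etrails (rggGraph A r P) k k).ncard = chainCount A r n k P := by
  rw [ncard_etrails, chainFuns_rgg hA, chainCount]
  rw [← Set.ncard_coe_finset]
  congr 1
  ext ι
  simp

end Count
section CountIntegral

open MeasureTheory

local notation "E2" => EuclideanSpace ℝ (Fin 2)

variable {A r : ℝ} {n m : ℕ}

lemma rggSample_isProb (hA : 0 < A) (n : ℕ) : IsProbabilityMeasure (rggSample A n) := by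
  haveI := torusUnif_isProb hA
  rw [rggSample]
  infer_instance

lemma measurable_comp_pi (ι : Fin (m + 1) → Fin n) :
    Measurable fun P : Fin n → E2 => P ∘ ι :=
  measurable_pi_lambda _ fun j => measurable_pi_apply (ι j)

lemma measurableSet_chainEvent (hA : 0 < A) (r : ℝ) (ι : Fin (m + 1) → Fin n) :
    MeasurableSet {P : Fin n → E2 |
      ∀ j : Fin m, torusDist A (P (ι j.castSucc)) (P (ι j.succ)) ≤ r} :=
  (measurable_comp_pi ι) (measurableSet_chainSet hA r m)

lemma measurableSet_chainPred (hA : 0 < A) (r : ℝ) (ι : Fin (m + 1) → Fin n) :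
    MeasurableSet {P : Fin n → E2 | chainPred A r P ι} := by
  by_cases hinj : Function.Injective ι
  · have : {P : Fin n → E2 | chainPred A r P ι} = {P : Fin n → E2 |
        ∀ j : Fin m, torusDist A (P (ι j.castSucc)) (P (ι j.succ)) ≤ r} := by
      ext P; simp [chainPred, hinj]
    rw [this]
    exact measurableSet_chainEvent hA r ι
  · have : {P : Fin n → E2 | chainPred A r P ι} = ∅ := by
      ext P; simp [chainPred, hinj]
    rw [this]
    exact MeasurableSet.empty

lemma integrable_cf (hA : 0 < A) (ι : Fin (m + 1) → Fin n) :
    Integrable (fun P : Fin n → E2 => if chainPred A r P ι then (1 : ℝ) else 0)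
      (rggSample A n) := by
  haveI := rggSample_isProb hA n
  have : (fun P : Fin n → E2 => if chainPred A r P ι then (1 : ℝ) else 0) =
      Set.indicator {P : Fin n → E2 | chainPred A r P ι} (fun _ => (1 : ℝ)) := by
    funext P
    by_cases h : chainPred A r P ι <;> simp [h]
  rw [this]
  exact (integrable_const (1 : ℝ)).indicator (measurableSet_chainPred hA r ι)

lemma integral_cf (hA : 0 < A) (hr0 : 0 < r) (hr1 : r < Real.sqrt A / 2)
    (ι : Fin (m + 1) → Fin n) :
    ∫ P, (if chainPred A r P ι then (1 : ℝ) else 0) ∂ rggSample A n =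
      if Function.Injective ι then (pBall A r ^ m).toReal else 0 := by
  by_cases hinj : Function.Injective ι
  · have heq : (fun P : Fin n → E2 => if chainPred A r P ι then (1 : ℝ) else 0) =
        Set.indicator {P : Fin n → E2 |
          ∀ j : Fin m, torusDist A (P (ι j.castSucc)) (P (ι j.succ)) ≤ r} (fun _ => (1 : ℝ)) := by
      funext P
      by_cases h : ∀ j : Fin m, torusDist A (P (ι j.castSucc)) (P (ι j.succ)) ≤ r
      · simp [chainPred, hinj, h]
      · simp [chainPred, hinj, h]
    rw [heq, integral_indicator_const (1 : ℝ) (measurableSet_chainEvent hA r ι),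
      measureReal_def, rgg_chain_prob hA hr0 hr1 hinj, if_pos hinj, smul_eq_mul, mul_one]
  · have heq : (fun P : Fin n → E2 => if chainPred A r P ι then (1 : ℝ) else 0) =
        fun _ => (0 : ℝ) := by
      funext P
      simp [chainPred, hinj]
    rw [heq, if_neg hinj]
    exact integral_zero _ _

lemma chainCount_cast (A r : ℝ) (n m : ℕ) (P : Fin n → E2) :
    ((chainCount A r n m P : ℝ)) =
      ∑ ι : Fin (m + 1) → Fin n, if chainPred A r P ι then (1 : ℝ) else 0 := by
  rw [chainCount, Finset.card_filter]
  push_cast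
  apply Finset.sum_congr rfl
  intro ι _
  by_cases h : chainPred A r P ι <;> simp [h]

lemma integrable_chainCount (hA : 0 < A) :
    Integrable (fun P : Fin n → E2 => (chainCount A r n m P : ℝ)) (rggSample A n) := by
  have : (fun P : Fin n → E2 => (chainCount A r n m P : ℝ)) =
      fun P => ∑ ι : Fin (m + 1) → Fin n, if chainPred A r P ι then (1 : ℝ) else 0 := by
    funext P; exact chainCount_cast A r n m P
  rw [this]
  exact integrable_finset_sum _ fun ι _ => integrable_cf hA ι

lemma integral_chainCount (hA : 0 < A) (hr0 : 0 < r) (hr1 : r < Real.sqrt A / 2) :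
    ∫ P, (chainCount A r n m P : ℝ) ∂ rggSample A n =
      (n.descFactorial (m + 1) : ℝ) * (pBall A r ^ m).toReal := by
  simp_rw [chainCount_cast A r n m]
  rw [integral_finset_sum _ fun ι _ => integrable_cf hA ι]
  have : ∀ ι : Fin (m + 1) → Fin n,
      ∫ P, (if chainPred A r P ι then (1 : ℝ) else 0) ∂ rggSample A n =
        if Function.Injective ι then (pBall A r ^ m).toReal else 0 :=
    integral_cf hA hr0 hr1
  rw [Finset.sum_congr rfl fun ι _ => this ι]
  rw [Finset.sum_ite, Finset.sum_const, Finset.sum_const_zero, add_zero, nsmul_eq_mul]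
  congr 1
  have h1 : (Finset.univ.filter fun ι : Fin (m + 1) → Fin n => Function.Injective ι).card =
      Fintype.card {ι : Fin (m + 1) → Fin n // Function.Injective ι} :=
    (Fintype.card_subtype _).symm
  rw [h1, Fintype.card_congr (Equiv.subtypeInjectiveEquivEmbedding (Fin (m + 1)) (Fin n)),
    Fintype.card_embedding_eq, Fintype.card_fin, Fintype.card_fin]

end CountIntegral
section BettiIntegral

open MeasureTheory

local notation "E2" => EuclideanSpace ℝ (Fin 2)

variable {A r : ℝ} {n k : ℕ}

lemma emBetti_le_chainCount (hA : 0 < A) (P : Fin n → E2) :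
    (emBetti (rggGraph A r P) k : ℝ) ≤ (chainCount A r n k P : ℝ) := by
  have h := (emBetti_bounds (rggGraph A r P) k).1
  rw [ncard_etrails_rgg hA] at h
  exact_mod_cast h

lemma chainCount_le_emBetti_add (hA : 0 < A) (P : Fin n → E2) :
    (chainCount A r n k P : ℝ) ≤ (emBetti (rggGraph A r P) k : ℝ) + (n : ℝ) ^ k := by
  have h := (emBetti_bounds (rggGraph A r P) k).2
  rw [ncard_etrails_rgg hA, Fintype.card_fin] at h
  exact_mod_cast h

lemma measurable_emBetti (hA : 0 < A) (r : ℝ) (n k : ℕ) :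
    Measurable fun P : Fin n → E2 => (emBetti (rggGraph A r P) k : ℝ) := by
  classical
  set adjB : (Fin n → E2) → (Fin n → Fin n → Bool) :=
    fun P i j => decide (torusDist A (P i) (P j) ≤ r) with hadjB
  have h1 : Measurable adjB := by
    apply measurable_pi_lambda
    intro i
    apply measurable_pi_lambda
    intro j
    apply measurable_to_countable'
    intro y
    have hev : MeasurableSet {P : Fin n → E2 | torusDist A (P i) (P j) ≤ r} := by
      have : {P : Fin n → E2 | torusDist A (P i) (P j) ≤ r} =
          (fun P : Fin n → E2 => (P i, P j)) ⁻¹' {q : E2 × E2 | torusDist A q.1 q.2 ≤ r} := rfl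
      rw [this]
      exact ((measurable_pi_apply i).prodMk (measurable_pi_apply j))
        (measurableSet_torusDist_pair hA r)
    cases y with
    | true =>
      have : (fun P => adjB P i j) ⁻¹' {true} = {P : Fin n → E2 | torusDist A (P i) (P j) ≤ r} := by
        ext P; simp [hadjB]
      rw [this]; exact hev
    | false =>
      have : (fun P => adjB P i j) ⁻¹' {false} =
          {P : Fin n → E2 | torusDist A (P i) (P j) ≤ r}ᶜ := by
        ext P; simp [hadjB]
      rw [this]; exact hev.compl
  have h2 : (fun P : Fin n → E2 => (emBetti (rggGraph A r P) k : ℝ)) =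
      (fun b : Fin n → Fin n → Bool =>
        (emBetti (SimpleGraph.fromRel fun i j => b i j = true) k : ℝ)) ∘ adjB := by
    funext P
    show (emBetti (rggGraph A r P) k : ℝ) =
      (emBetti (SimpleGraph.fromRel fun i j => adjB P i j = true) k : ℝ)
    congr 2
    rw [rggGraph]
    congr 1
    funext i j
    rw [hadjB]
    exact (decide_eq_true_eq).symm
  rw [h2]
  exact (measurable_of_countable _).comp h1

lemma integrable_emBetti (hA : 0 < A) (r : ℝ) (n k : ℕ) :
    Integrable (fun P : Fin n → E2 => (emBetti (rggGraph A r P) k : ℝ)) (rggSample A n) := by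
  haveI := rggSample_isProb hA n
  refine Integrable.mono' (integrable_chainCount (r := r) (m := k) hA)
    (measurable_emBetti hA r n k).aestronglyMeasurable ?_
  filter_upwards with P
  rw [Real.norm_eq_abs, abs_of_nonneg (by positivity)]
  exact emBetti_le_chainCount hA P

lemma integral_emBetti_le (hA : 0 < A) (hr0 : 0 < r) (hr1 : r < Real.sqrt A / 2) :
    ∫ P, (emBetti (rggGraph A r P) k : ℝ) ∂ rggSample A n ≤
      (n.descFactorial (k + 1) : ℝ) * (pBall A r ^ k).toReal := by
  rw [← integral_chainCount hA hr0 hr1]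
  exact integral_mono (integrable_emBetti hA r n k) (integrable_chainCount hA)
    fun P => emBetti_le_chainCount hA P

lemma le_integral_emBetti (hA : 0 < A) (hr0 : 0 < r) (hr1 : r < Real.sqrt A / 2) :
    (n.descFactorial (k + 1) : ℝ) * (pBall A r ^ k).toReal - (n : ℝ) ^ k ≤
      ∫ P, (emBetti (rggGraph A r P) k : ℝ) ∂ rggSample A n := by
  haveI := rggSample_isProb hA n
  have h1 : ∫ P, (chainCount A r n k P : ℝ) ∂ rggSample A n ≤
      (∫ P, (emBetti (rggGraph A r P) k : ℝ) ∂ rggSample A n) + (n : ℝ) ^ k := by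
    have h2 : ∫ P, ((emBetti (rggGraph A r P) k : ℝ) + (n : ℝ) ^ k) ∂ rggSample A n =
        (∫ P, (emBetti (rggGraph A r P) k : ℝ) ∂ rggSample A n) + (n : ℝ) ^ k := by
      rw [integral_add (integrable_emBetti hA r n k) (integrable_const _), integral_const]
      simp
    rw [← h2]
    exact integral_mono (integrable_chainCount hA)
      ((integrable_emBetti hA r n k).add (integrable_const _))
      fun P => chainCount_le_emBetti_add hA P
  rw [integral_chainCount hA hr0 hr1] at h1
  linarith

end BettiIntegral
section FinalLimit

open MeasureTheory Filter

variable {A r : ℝ}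

lemma pBall_toReal (hA : 0 < A) (hr : 0 ≤ r) :
    (pBall A r).toReal = A⁻¹ * (Real.pi * r ^ 2) := by
  rw [pBall, ENNReal.toReal_mul, ENNReal.toReal_inv, ENNReal.toReal_ofReal hA.le,
    ENNReal.toReal_ofReal (by positivity)]

lemma pk_div (hA : 0 < A) (hr0 : 0 < r) (k : ℕ) :
    (pBall A r ^ k).toReal / r ^ (2 * k) = (Real.pi / A) ^ k := by
  rw [ENNReal.toReal_pow, pBall_toReal hA hr0.le]
  have h1 : (A⁻¹ * (Real.pi * r ^ 2)) ^ k = (Real.pi / A) ^ k * r ^ (2 * k) := by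
    rw [pow_mul, ← mul_pow]
    congr 1
    field_simp
  rw [h1, mul_div_assoc, div_self (by positivity), mul_one]

lemma tendsto_ratio_term (i : ℕ) :
    Tendsto (fun n : ℕ => ((n : ℝ) - i) / n) atTop (nhds 1) := by
  have h : Tendsto (fun n : ℕ => 1 - (i : ℝ) * (1 / n)) atTop (nhds (1 - (i : ℝ) * 0)) :=
    tendsto_const_nhds.sub (tendsto_const_nhds.mul tendsto_one_div_atTop_nhds_zero_nat)
  rw [mul_zero, sub_zero] at h
  refine h.congr' ?_
  rw [Filter.eventuallyEq_iff_exists_mem]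
  refine ⟨{n | 1 ≤ n}, Filter.eventually_atTop.mpr ⟨1, fun n hn => hn⟩, fun n hn => ?_⟩
  have hn0 : (n : ℝ) ≠ 0 := by
    have : (1 : ℕ) ≤ n := hn
    positivity
  field_simp

lemma tendsto_desc_ratio (k : ℕ) :
    Tendsto (fun n : ℕ => ∏ i ∈ Finset.range (k + 1), ((n : ℝ) - i) / n) atTop (nhds 1) := by
  have h := tendsto_finset_prod (f := fun (i : ℕ) (n : ℕ) => ((n : ℝ) - i) / n)
    (a := fun _ => (1 : ℝ)) (x := atTop) (Finset.range (k + 1))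
    (fun i _ => tendsto_ratio_term i)
  simpa using h

end FinalLimit
/-- Theorem 5.9: fix `A > 0`, `k ≥ 1` and a radius `0 < r < √A/2`.
Then `E[β_{k,k}(G(n,r,A))] / (n^{k+1} r^{2k}) → (π/A)^k` as `n → ∞`. -/
theorem rgg_expected_betti_asymptotics (A : ℝ) (hA : 0 < A) (k : ℕ) (hk : 1 ≤ k)
    (r : ℝ) (hr0 : 0 < r) (hr1 : r < Real.sqrt A / 2) :
    Filter.Tendsto
      (fun n : ℕ =>
        (∫ P, (emBetti (rggGraph A r P) k : ℝ) ∂ rggSample A n) /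
          ((n : ℝ) ^ (k + 1) * r ^ (2 * k)))
      Filter.atTop (nhds ((Real.pi / A) ^ k)) := by
  open Filter in
  have hDnn : ∀ n : ℕ, (0:ℝ) ≤ ((n : ℝ) ^ (k + 1) * r ^ (2 * k))⁻¹ := fun n => by positivity
  -- upper bound sequence
  have hub : ∀ n : ℕ,
      (∫ P, (emBetti (rggGraph A r P) k : ℝ) ∂ rggSample A n) /
        ((n : ℝ) ^ (k + 1) * r ^ (2 * k)) ≤
      ((n.descFactorial (k + 1) : ℝ) * (pBall A r ^ k).toReal) /
        ((n : ℝ) ^ (k + 1) * r ^ (2 * k)) := by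
    intro n
    rw [div_eq_mul_inv, div_eq_mul_inv]
    exact mul_le_mul_of_nonneg_right (integral_emBetti_le hA hr0 hr1) (hDnn n)
  have hlb : ∀ n : ℕ,
      ((n.descFactorial (k + 1) : ℝ) * (pBall A r ^ k).toReal - (n : ℝ) ^ k) /
        ((n : ℝ) ^ (k + 1) * r ^ (2 * k)) ≤
      (∫ P, (emBetti (rggGraph A r P) k : ℝ) ∂ rggSample A n) /
        ((n : ℝ) ^ (k + 1) * r ^ (2 * k)) := by
    intro n
    rw [div_eq_mul_inv, div_eq_mul_inv]
    exact mul_le_mul_of_nonneg_right (le_integral_emBetti hA hr0 hr1) (hDnn n)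
  -- the upper sequence converges to the limit
  have hU : Tendsto (fun n : ℕ =>
      ((n.descFactorial (k + 1) : ℝ) * (pBall A r ^ k).toReal) /
        ((n : ℝ) ^ (k + 1) * r ^ (2 * k))) atTop (nhds ((Real.pi / A) ^ k)) := by
    have hmul : Tendsto (fun n : ℕ =>
        (∏ i ∈ Finset.range (k + 1), ((n : ℝ) - i) / n) * (Real.pi / A) ^ k) atTop
        (nhds ((Real.pi / A) ^ k)) := by
      have := (tendsto_desc_ratio k).mul_const ((Real.pi / A) ^ k)
      rwa [one_mul] at this
    refine hmul.congr' ?_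
    rw [Filter.eventuallyEq_iff_exists_mem]
    refine ⟨{n | k + 1 ≤ n}, Filter.eventually_atTop.mpr ⟨k + 1, fun n hn => hn⟩, fun n hn => ?_⟩
    have hn' : k + 1 ≤ n := hn
    have hcast : (n.descFactorial (k + 1) : ℝ) = ∏ i ∈ Finset.range (k + 1), ((n : ℝ) - i) := by
      rw [Nat.descFactorial_eq_prod_range, Nat.cast_prod]
      refine Finset.prod_congr rfl fun i hi => ?_
      rw [Finset.mem_range] at hi
      rw [Nat.cast_sub (by omega)]
    dsimp only
    rw [Finset.prod_div_distrib, Finset.prod_const, Finset.card_range,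
      ← pk_div hA hr0 k, div_mul_div_comm, ← hcast]
  -- the error term converges to zero
  have herr : Tendsto (fun n : ℕ =>
      (n : ℝ) ^ k / ((n : ℝ) ^ (k + 1) * r ^ (2 * k))) atTop (nhds 0) := by
    have hmul : Tendsto (fun n : ℕ => (1 / (n : ℝ)) * (1 / r ^ (2 * k))) atTop (nhds 0) := by
      have := tendsto_one_div_atTop_nhds_zero_nat.mul_const (1 / r ^ (2 * k))
      rwa [zero_mul] at this
    refine hmul.congr' ?_
    rw [Filter.eventuallyEq_iff_exists_mem]
    refine ⟨{n | 1 ≤ n}, Filter.eventually_atTop.mpr ⟨1, fun n hn => hn⟩, fun n hn => ?_⟩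
    have hn' : (1 : ℕ) ≤ n := hn
    have hn0 : (n : ℝ) ≠ 0 := by positivity
    have hrne : r ^ (2 * k) ≠ 0 := by positivity
    dsimp only
    field_simp
    ring
  -- lower sequence converges to the limit
  have hL : Tendsto (fun n : ℕ =>
      ((n.descFactorial (k + 1) : ℝ) * (pBall A r ^ k).toReal - (n : ℝ) ^ k) /
        ((n : ℝ) ^ (k + 1) * r ^ (2 * k))) atTop (nhds ((Real.pi / A) ^ k)) := by
    have := hU.sub herr
    rw [sub_zero] at this
    refine this.congr fun n => ?_
    rw [sub_div]
  exact tendsto_of_tendsto_of_tendsto_of_le_of_le' hL hU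
    (Filter.Eventually.of_forall hlb) (Filter.Eventually.of_forall hub)
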